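/- Let C : T ⇒ X be an admissible multifunction on a complete σ-finite inner regular measure space and A ∈ 𝒜. If C(t) ≠ ∅ for all t ∈ A, then there exists a strongly measurable selection x : A → X with x(t) ∈ C(t) for μ-a.e. t ∈ A. -/

import Mathlib

open MeasureTheory Topology Filter Set Pointwise
open scoped ENNReal NNReal

noncomputable section

/-- Lower semicontinuity (in the set-valued sense) of `Φ` at every point of `B`,
relative to `B`. -/
def LscOn {T Y : Type*} [TopologicalSpace T] [TopologicalSpace Y]
    (B : Set T) (Φ : T → Set Y) : Prop :=
  ∀ t ∈ B, ∀ V : Set Y, IsOpen V → (Φ t ∩ V).Nonempty →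
    ∀ᶠ s in nhdsWithin t B, (Φ s ∩ V).Nonempty

/-- Epigraph of an extended-real-valued function. -/
def epi {X : Type*} (g : X → EReal) : Set (X × ℝ) :=
  {p : X × ℝ | g p.1 ≤ (p.2 : EReal)}

/-- Strict epigraph. -/
def epis {X : Type*} (g : X → EReal) : Set (X × ℝ) :=
  {p : X × ℝ | g p.1 < (p.2 : EReal)}

/-- Inner regularity of a measure: every measurable set of finite measure can be
approximated from inside by compact sets. -/
def InnerRegularM {T : Type*} [TopologicalSpace T] [MeasurableSpace T]
    (μ : Measure T) : Prop :=
  ∀ ε : ℝ≥0∞, 0 < ε → ∀ B : Set T, MeasurableSet B → μ B < ⊤ →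
    ∃ K ⊆ B, IsCompact K ∧ μ (B \ K) < ε

/-- Lusin integrand. -/
def LusinIntegrand {T X : Type*} [TopologicalSpace T] [MeasurableSpace T]
    [TopologicalSpace X] (μ : Measure T) (f : T → X → EReal) : Prop :=
  ∀ ε : ℝ≥0∞, 0 < ε → ∀ A : Set T, MeasurableSet A → μ A < ⊤ →
    ∃ B ⊆ A, IsCompact B ∧ μ (A \ B) < ε ∧ LscOn B (fun t => epi (f t))

/-- Uniform Lusin family of integrands. -/
def UniformLusinFamily {T X I : Type*} [TopologicalSpace T] [MeasurableSpace T]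
    [TopologicalSpace X] (μ : Measure T) (f : I → T → X → EReal) : Prop :=
  ∀ ε : ℝ≥0∞, 0 < ε → ∀ A : Set T, MeasurableSet A → μ A < ⊤ →
    ∃ B ⊆ A, IsCompact B ∧ μ (A \ B) < ε ∧ ∀ i : I, LscOn B (fun t => epi (f i t))

/-- Scorza-Dragoni function. -/
def ScorzaDragoniFun {T X : Type*} [TopologicalSpace T] [MeasurableSpace T]
    [TopologicalSpace X] (μ : Measure T) (g : T → X → EReal) : Prop :=
  ∀ ε : ℝ≥0∞, 0 < ε → ∀ A : Set T, MeasurableSet A → μ A < ⊤ →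
    ∃ B ⊆ A, IsCompact B ∧ μ (A \ B) < ε ∧
      ContinuousOn (fun p : T × X => g p.1 p.2) (B ×ˢ (Set.univ : Set X))

/-- Lusin multifunction (uniform family version). -/
def UniformLusinMultifamily {T X I : Type*} [TopologicalSpace T] [MeasurableSpace T]
    [TopologicalSpace X] (μ : Measure T) (C : I → T → Set X) : Prop :=
  ∀ ε : ℝ≥0∞, 0 < ε → ∀ A : Set T, MeasurableSet A → μ A < ⊤ →
    ∃ B ⊆ A, IsCompact B ∧ μ (A \ B) < ε ∧ ∀ i : I, LscOn B (C i)

/-- `g ∈ Γ(X)`: proper, convex (convex epigraph) and lower semicontinuous. -/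
def InGamma {X : Type*} [AddCommGroup X] [Module ℝ X] [TopologicalSpace X]
    (g : X → EReal) : Prop :=
  (∃ x, g x ≠ ⊤) ∧ (∀ x, g x ≠ ⊥) ∧ LowerSemicontinuous g ∧ Convex ℝ (epi g)

/-- Admissible integrand. -/
def AdmissibleIntegrand {T X : Type*} [TopologicalSpace T] [MeasurableSpace T]
    [NormedAddCommGroup X] [NormedSpace ℝ X] (μ : Measure T)
    (f : T → X → EReal) : Prop :=
  ∃ (I : Type) (fi : I → T → X → EReal),
    UniformLusinFamily μ fi ∧ (∀ i t, InGamma (fi i t)) ∧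
    ∀ t, epi (f t) = closure (epi (fun x => ⨅ i : I, fi i t x))

/-- Admissible multifunction. -/
def AdmissibleMultifunction {T X : Type*} [TopologicalSpace T] [MeasurableSpace T]
    [NormedAddCommGroup X] [NormedSpace ℝ X] (μ : Measure T)
    (C : T → Set X) : Prop :=
  ∃ (I : Type) (Ci : I → T → Set X),
    UniformLusinMultifamily μ Ci ∧ (∀ i t, IsClosed (Ci i t) ∧ Convex ℝ (Ci i t)) ∧
    ∀ t, C t = closure (⋃ i : I, Ci i t)

open Classical in
/-- Indicator function with values in `EReal`. -/
def indE {X : Type*} (S : Set X) : X → EReal := fun x => if x ∈ S then 0 else ⊤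

/-- Positive part of an extended real, as an `ℝ≥0∞`. -/
def ERealPos (x : EReal) : ℝ≥0∞ := if x = ⊤ then ⊤ else ENNReal.ofReal x.toReal

/-- Upper integral of an extended-real-valued function, with the convention
`+∞ + (-∞) = +∞`. -/
def upInt {T : Type*} [MeasurableSpace T] (μ : Measure T) (g : T → EReal) : EReal :=
  if (∫⁻ t, ERealPos (g t) ∂μ) = ⊤ then ⊤
  else ((∫⁻ t, ERealPos (g t) ∂μ : ℝ≥0∞) : EReal) - ((∫⁻ t, ERealPos (-(g t)) ∂μ : ℝ≥0∞) : EReal)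

end



section SelectionHelpers

set_option linter.unusedSectionVars false

variable {T X : Type*} [TopologicalSpace T] [MeasurableSpace T]
    [OpensMeasurableSpace T] [NormedAddCommGroup X] [CompleteSpace X]
    {μ : MeasureTheory.Measure T}

open Classical in
/-- Gluing countably many strongly measurable functions on measurable sets. -/
theorem glueSM {Y : Type*} [TopologicalSpace Y]
    [TopologicalSpace.PseudoMetrizableSpace Y]
    (E : ℕ → Set T) (hE : ∀ n, MeasurableSet (E n))
    (f : ℕ → T → Y) (hf : ∀ n, MeasureTheory.StronglyMeasurable (f n)) (d : Y) :
    MeasureTheory.StronglyMeasurable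
      (fun t => if h : ∃ n, t ∈ E n then f (Nat.find h) t else d) := by
  classical
  set E' : ℕ → Set T := disjointed E with hE'
  have hE'm : ∀ n, MeasurableSet (E' n) := MeasurableSet.disjointed hE
  set G : ℕ → T → Y := fun n => Nat.rec ((E' 0).piecewise (f 0) (fun _ => d))
    (fun n g => (E' (n+1)).piecewise (f (n+1)) g) n with hG
  have hGsm : ∀ n, StronglyMeasurable (G n) := by
    intro n
    induction n with
    | zero => exact StronglyMeasurable.piecewise (hE'm 0) (hf 0) stronglyMeasurable_const
    | succ n ih => exact StronglyMeasurable.piecewise (hE'm (n+1)) (hf (n+1)) ih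
  apply stronglyMeasurable_of_tendsto atTop hGsm
  rw [tendsto_pi_nhds]
  intro t
  by_cases h : ∃ n, t ∈ E n
  · have hfind : t ∈ E' (Nat.find h) := by
      rw [hE', disjointed_eq_inter_compl]
      refine ⟨Nat.find_spec h, ?_⟩
      simp only [Set.mem_iInter, Set.mem_compl_iff]
      intro i hi
      exact Nat.find_min h hi
    have hnot : ∀ m, m ≠ Nat.find h → t ∉ E' m := by
      intro m hm hmem
      exact (Set.disjoint_left.1 (disjoint_disjointed E hm)) hmem hfind
    -- G n t = f (Nat.find h) t for n ≥ Nat.find h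
    have key : ∀ n, Nat.find h ≤ n → G n t = f (Nat.find h) t := by
      intro n hn
      induction n with
      | zero =>
        have : Nat.find h = 0 := Nat.le_zero.1 hn
        rw [this] at hfind
        show Set.piecewise _ _ _ t = _
        rw [this]
        exact Set.piecewise_eq_of_mem _ _ _ hfind
      | succ n ih =>
        rcases Nat.lt_or_ge (Nat.find h) (n+1) with hlt | hge
        · have : G (n+1) t = G n t := by
            show Set.piecewise _ _ _ t = _
            rw [Set.piecewise_eq_of_notMem]
            exact hnot _ (by omega)
          rw [this, ih (by omega)]
        · have heq : Nat.find h = n+1 := le_antisymm hn hge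
          show Set.piecewise _ _ _ t = _
          rw [heq] at hfind ⊢
          exact Set.piecewise_eq_of_mem _ _ _ hfind
    simp only [dif_pos h]
    exact tendsto_atTop_of_eventually_const key
  · have key : ∀ n, G n t = d := by
      intro n
      have hnot : ∀ m, t ∉ E' m := fun m hm => h ⟨m, disjointed_subset E m hm⟩
      induction n with
      | zero => exact Set.piecewise_eq_of_notMem _ _ _ (hnot 0)
      | succ n ih =>
        show Set.piecewise _ _ _ t = _
        rw [Set.piecewise_eq_of_notMem _ _ _ (hnot (n+1))]; exact ih
    simp only [dif_neg h]
    exact tendsto_atTop_of_eventually_const (fun n (_ : 0 ≤ n) => key n)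

theorem LscOn.mono {B P : Set T} {Φ : T → Set X} (h : LscOn B Φ) (hPB : P ⊆ B) :
    LscOn P Φ := fun t ht V hV hne =>
  (h t (hPB ht) V hV hne).filter_mono (nhdsWithin_mono t hPB)

theorem LscOn.inter_open {P : Set T} {Φ : T → Set X} (h : LscOn P Φ) {O : Set X}
    (hO : IsOpen O) : LscOn P (fun t => Φ t ∩ O) := by
  intro t ht V hV hne
  have hne' : (Φ t ∩ (O ∩ V)).Nonempty := by
    rw [← Set.inter_assoc]; exact hne
  filter_upwards [h t ht (O ∩ V) (hO.inter hV) hne'] with s hs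
  rw [Set.inter_assoc]; exact hs

/-- One refinement step. -/
theorem stepLemma (hreg : InnerRegularM μ) {Ψ : T → Set X} {P : Set T}
    (hPm : MeasurableSet P) (hPfin : μ P < ⊤) (hlsc : LscOn P Ψ)
    (hne : ∀ t ∈ P, (Ψ t).Nonempty) {r : ℝ} (hr : 0 < r) {ε : ℝ≥0∞} (hε : 0 < ε) :
    ∃ (Q : ℕ → Set T) (c : ℕ → X), (∀ j, MeasurableSet (Q j)) ∧ (∀ j, Q j ⊆ P) ∧
      Pairwise (Function.onFun Disjoint Q) ∧ μ (P \ ⋃ j, Q j) < ε ∧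
      ∀ j, ∀ t ∈ Q j, (Ψ t ∩ Metric.ball (c j) r).Nonempty := by
  classical
  obtain ⟨K, hKP, hKc, hKμ⟩ := hreg ε hε P hPm hPfin
  set K' : Set T := P \ toMeasurable μ (P \ K) with hK'
  have hK'm : MeasurableSet K' := hPm.diff (measurableSet_toMeasurable μ _)
  have hK'K : K' ⊆ K := fun t ⟨htP, htn⟩ => by
    by_contra hc
    exact htn (subset_toMeasurable μ _ ⟨htP, hc⟩)
  have hK'loss : μ (P \ K') < ε := by
    have : P \ K' ⊆ toMeasurable μ (P \ K) := fun t ⟨htP, htn⟩ => by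
      simpa [hK', htP] using htn
    calc μ (P \ K') ≤ μ (toMeasurable μ (P \ K)) := measure_mono this
    _ = μ (P \ K) := measure_toMeasurable _
    _ < ε := hKμ
  -- for each t, an open nbhd and a center
  have hcov : ∀ t : T, ∃ (O : Set T) (y : X), IsOpen O ∧
      (t ∈ K → t ∈ O ∧ ∀ s ∈ O ∩ P, (Ψ s ∩ Metric.ball y r).Nonempty) := by
    intro t
    by_cases ht : t ∈ K
    · obtain ⟨y, hy⟩ := hne t (hKP ht)
      have hev := hlsc t (hKP ht) (Metric.ball y r) Metric.isOpen_ball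
        ⟨y, hy, Metric.mem_ball_self hr⟩
      rw [eventually_iff, mem_nhdsWithin] at hev
      obtain ⟨O, hOo, htO, hOsub⟩ := hev
      exact ⟨O, y, hOo, fun _ => ⟨htO, fun s hs => hOsub hs⟩⟩
    · exact ⟨∅, 0, isOpen_empty, fun h => absurd h ht⟩
  choose O y hOopen hOK using hcov
  obtain ⟨u, huK, hucov⟩ := hKc.elim_nhds_subcover O
    (fun t ht => (hOopen t).mem_nhds ((hOK t ht).1))
  -- enumerate the finite set
  set l : List T := u.toList with hl
  set OO : ℕ → Set T := fun j => (l[j]?).elim ∅ O with hOO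
  set cc : ℕ → X := fun j => (l[j]?).elim 0 y with hcc
  have hOOopen : ∀ j, IsOpen (OO j) := by
    intro j
    rw [hOO]
    cases hj : l[j]? with
    | some t => simp only [hj, Option.elim]; exact hOopen t
    | none => simp only [hj, Option.elim]; exact isOpen_empty
  have hOOprop : ∀ j t, t ∈ OO j → t ∈ P → (Ψ t ∩ Metric.ball (cc j) r).Nonempty := by
    intro j t htO htP
    rw [hOO] at htO
    rw [hcc]
    cases hj : l[j]? with
    | some s =>
      simp only [hj, Option.elim] at htO ⊢
      have hsu : s ∈ u := by
        rw [← Finset.mem_toList, ← hl]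
        exact List.mem_of_getElem? hj
      exact (hOK s (huK s hsu)).2 t ⟨htO, htP⟩
    | none => simp only [hj, Option.elim] at htO; exact absurd htO (Set.notMem_empty t)
  set Q : ℕ → Set T := fun j => (K' ∩ OO j) \ ⋃ k ∈ Finset.range j, OO k with hQ
  refine ⟨Q, cc, ?_, ?_, ?_, ?_, ?_⟩
  · intro j
    exact ((hK'm.inter (hOOopen j).measurableSet).diff
      (Finset.measurableSet_biUnion _ (fun k _ => (hOOopen k).measurableSet)))
  · intro j t ht
    exact ht.1.1.1
  · intro j k hjk
    rcases lt_or_gt_of_ne hjk with h | h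
    · refine Set.disjoint_left.2 fun t htj htk => ?_
      exact htk.2 (Set.mem_biUnion (Finset.mem_range.2 h) htj.1.2)
    · refine Set.disjoint_left.2 fun t htj htk => ?_
      exact htj.2 (Set.mem_biUnion (Finset.mem_range.2 h) htk.1.2)
  · refine lt_of_le_of_lt (measure_mono fun t ⟨htP, htn⟩ => ?_) hK'loss
    refine ⟨htP, fun htK' => htn ?_⟩
    -- t ∈ K' ⊆ K covered by some OO; least index gives membership in Q
    have hex : ∃ j, t ∈ OO j := by
      have h1 := hucov (hK'K htK')
      rw [Set.mem_iUnion₂] at h1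
      obtain ⟨x, hxu, hxO⟩ := h1
      obtain ⟨j, hj⟩ := List.getElem?_of_mem ((Finset.mem_toList.2 hxu))
      exact ⟨j, by rw [hOO]; simp only [hl, hj, Option.elim]; exact hxO⟩
    refine Set.mem_iUnion.2 ⟨Nat.find hex, ⟨⟨htK', Nat.find_spec hex⟩, ?_⟩⟩
    intro hmem
    rw [Set.mem_iUnion₂] at hmem
    obtain ⟨k, hk, hkO⟩ := hmem
    exact Nat.find_min hex (Finset.mem_range.1 hk) hkO
  · intro j t ht
    exact hOOprop j t ht.1.2 ht.1.1.1

/-- Core: strongly measurable almost-selection on a finite-measure set where `Φ` is lsc. -/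
theorem selCore (hreg : InnerRegularM μ) {Φ : T → Set X} {S : Set T}
    (hSm : MeasurableSet S) (hSfin : μ S < ⊤) (hlsc : LscOn S Φ)
    (hne : ∀ t ∈ S, (Φ t).Nonempty) (hcl : ∀ t ∈ S, IsClosed (Φ t))
    {ε : ℝ≥0∞} (hε : 0 < ε) (hεtop : ε ≠ ⊤) :
    ∃ D ⊆ S, MeasurableSet D ∧ μ (S \ D) < ε ∧
      ∃ x : T → X, StronglyMeasurable x ∧ ∀ t ∈ D, x t ∈ Φ t := by
  classical
  set Inv : ℕ → (ℕ → Set T) → (ℕ → X) → Prop := fun n Q c =>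
    (∀ i, MeasurableSet (Q i)) ∧ (∀ i, Q i ⊆ S) ∧ Pairwise (Function.onFun Disjoint Q) ∧
      (∀ i, ∀ t ∈ Q i, (Φ t ∩ Metric.ball (c i) ((1/2 : ℝ)^n)).Nonempty) with hInv
  set Rel : ℕ → (ℕ → Set T) → (ℕ → Set T) → (ℕ → X) → (ℕ → X) → Prop :=
    fun n Q Q' c c' =>
      (∀ j t, t ∈ Q' j → ∃ i, t ∈ Q i ∧ dist (c' j) (c i) ≤ 2 * (1/2 : ℝ)^n) ∧
      μ ((⋃ i, Q i) \ ⋃ j, Q' j) ≤ ε * 2⁻¹ ^ (n+3) with hRel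
  -- initial state
  have init : ∃ Q c, Inv 0 Q c ∧ μ (S \ ⋃ j, Q j) ≤ ε * 2⁻¹ ^ 2 := by
    obtain ⟨Q, c, h1, h2, h3, h4, h5⟩ := stepLemma hreg hSm hSfin hlsc hne
      (r := (1/2 : ℝ)^0) (by norm_num) (ε := ε * 2⁻¹ ^ 2)
      (ENNReal.mul_pos hε.ne' (ENNReal.pow_ne_zero (by norm_num) _))
    exact ⟨Q, c, ⟨h1, h2, h3, h5⟩, h4.le⟩
  -- step
  have stepEx : ∀ n Q c, Inv n Q c → ∃ Q' c', Inv (n+1) Q' c' ∧ Rel n Q Q' c c' := by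
    intro n Q c hinv
    obtain ⟨hQm, hQS, hQd, hQball⟩ := hinv
    have hpiece : ∀ i : ℕ, ∃ (R : ℕ → Set T) (d : ℕ → X),
        (∀ j, MeasurableSet (R j)) ∧ (∀ j, R j ⊆ Q i) ∧ Pairwise (Function.onFun Disjoint R) ∧
        μ (Q i \ ⋃ j, R j) < ε * 2⁻¹ ^ (n+4) * 2⁻¹ ^ i ∧
        ∀ j, ∀ t ∈ R j,
          ((Φ t ∩ Metric.ball (c i) ((1/2 : ℝ)^n)) ∩
            Metric.ball (d j) ((1/2 : ℝ)^(n+1))).Nonempty := by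
      intro i
      have hlsci : LscOn (Q i) (fun t => Φ t ∩ Metric.ball (c i) ((1/2 : ℝ)^n)) :=
        (hlsc.mono (hQS i)).inter_open Metric.isOpen_ball
      exact stepLemma hreg (hQm i) (lt_of_le_of_lt (measure_mono (hQS i)) hSfin)
        hlsci (fun t ht => hQball i t ht) (r := (1/2 : ℝ)^(n+1)) (by positivity)
        (ε := ε * 2⁻¹ ^ (n+4) * 2⁻¹ ^ i)
        (ENNReal.mul_pos (ENNReal.mul_pos hε.ne' (ENNReal.pow_ne_zero (by norm_num) _)).ne'
          (ENNReal.pow_ne_zero (by norm_num) _))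
    choose R d hRm hRQ hRd hRμ hRball using hpiece
    set e : ℕ ≃ ℕ × ℕ := (Denumerable.eqv (ℕ × ℕ)).symm with he
    refine ⟨fun k => R (e k).1 (e k).2, fun k => d (e k).1 (e k).2, ⟨?_, ?_, ?_, ?_⟩, ?_, ?_⟩
    · exact fun k => hRm _ _
    · exact fun k => (hRQ _ _).trans (hQS _)
    · intro k k' hkk'
      have hekk' : e k ≠ e k' := fun hcon => hkk' (e.injective hcon)
      by_cases hp : (e k).1 = (e k').1
      · have : (e k).2 ≠ (e k').2 := fun h2 => hekk' (Prod.ext hp h2)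
        simp only [Function.onFun]
        rw [hp]
        exact hRd _ this
      · simp only [Function.onFun]
        exact Set.disjoint_of_subset (hRQ _ _) (hRQ _ _) (hQd hp)
    · intro k t ht
      obtain ⟨z, ⟨hz1, _⟩, hz2⟩ := hRball _ _ t ht
      exact ⟨z, hz1, hz2⟩
    · intro j t ht
      obtain ⟨z, ⟨hz1, hz2⟩, hz3⟩ := hRball _ _ t ht
      refine ⟨(e j).1, hRQ _ _ ht, ?_⟩
      calc dist (d (e j).1 (e j).2) (c (e j).1)
          ≤ dist (d (e j).1 (e j).2) z + dist z (c (e j).1) := dist_triangle _ _ _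
        _ ≤ (1/2 : ℝ)^(n+1) + (1/2 : ℝ)^n := by
            have h1 := Metric.mem_ball.1 hz3
            have h2 := Metric.mem_ball.1 hz2
            rw [dist_comm] at h1
            linarith
        _ ≤ 2 * (1/2 : ℝ)^n := by rw [pow_succ]; linarith [pow_nonneg (by norm_num : (0:ℝ) ≤ 1/2) n]
    · -- measure estimate
      have hsub : (⋃ i, Q i) \ (⋃ k, R (e k).1 (e k).2) ⊆ ⋃ i, (Q i \ ⋃ j, R i j) := by
        intro t ⟨ht1, ht2⟩
        rw [Set.mem_iUnion] at ht1 ⊢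
        obtain ⟨i, hti⟩ := ht1
        refine ⟨i, hti, fun hmem => ht2 ?_⟩
        rw [Set.mem_iUnion] at hmem ⊢
        obtain ⟨j, htj⟩ := hmem
        exact ⟨e.symm (i, j), by simp [Equiv.apply_symm_apply, htj]⟩
      calc μ ((⋃ i, Q i) \ ⋃ k, R (e k).1 (e k).2)
          ≤ μ (⋃ i, (Q i \ ⋃ j, R i j)) := measure_mono hsub
        _ ≤ ∑' i, μ (Q i \ ⋃ j, R i j) := measure_iUnion_le _
        _ ≤ ∑' i, ε * 2⁻¹ ^ (n+4) * 2⁻¹ ^ i := ENNReal.tsum_le_tsum (fun i => (hRμ i).le)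
        _ = ε * 2⁻¹ ^ (n+4) * ∑' i, 2⁻¹ ^ i := ENNReal.tsum_mul_left
        _ = ε * 2⁻¹ ^ (n+4) * 2 := by
            rw [ENNReal.tsum_geometric]
            norm_num [ENNReal.one_sub_inv_two]
        _ = ε * 2⁻¹ ^ (n+3) := by
            rw [mul_assoc, pow_succ, mul_assoc, ENNReal.inv_mul_cancel (by norm_num) (by norm_num), mul_one]
  -- build the sequence of states
  obtain ⟨Q0, c0, hQ0inv, hQ0μ⟩ := init
  have stepEx' : ∀ n (p : (ℕ → Set T) × (ℕ → X)), Inv n p.1 p.2 →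
      ∃ p' : (ℕ → Set T) × (ℕ → X), Inv (n+1) p'.1 p'.2 ∧ Rel n p.1 p'.1 p.2 p'.2 := by
    intro n p hp
    obtain ⟨Q', c', h1, h2⟩ := stepEx n p.1 p.2 hp
    exact ⟨(Q', c'), h1, h2⟩
  choose F hF1 hF2 using stepEx'
  set seq : (n : ℕ) → {p : (ℕ → Set T) × (ℕ → X) // Inv n p.1 p.2} := fun n =>
    Nat.rec ⟨(Q0, c0), hQ0inv⟩ (fun n s => ⟨F n s.1 s.2, hF1 n s.1 s.2⟩) n with hseqdef
  set Qn : ℕ → ℕ → Set T := fun n => (seq n).1.1 with hQn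
  set cn : ℕ → ℕ → X := fun n => (seq n).1.2 with hcn
  have hseqinv : ∀ n, Inv n (Qn n) (cn n) := fun n => (seq n).2
  have hseqrel : ∀ n, Rel n (Qn n) (Qn (n+1)) (cn n) (cn (n+1)) := fun n =>
    hF2 n (seq n).1 (seq n).2
  set Dn : ℕ → Set T := fun n => ⋃ i, Qn n i with hDn
  have hDnm : ∀ n, MeasurableSet (Dn n) := fun n =>
    MeasurableSet.iUnion (fun i => (hseqinv n).1 i)
  have hDnS : ∀ n, Dn n ⊆ S := fun n =>
    Set.iUnion_subset (fun i => (hseqinv n).2.1 i)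
  have hDnanti : ∀ n, Dn (n+1) ⊆ Dn n := by
    intro n t ht
    rw [hDn, Set.mem_iUnion] at ht ⊢
    obtain ⟨j, hj⟩ := ht
    obtain ⟨i, hi, _⟩ := (hseqrel n).1 j t hj
    exact ⟨i, hi⟩
  set D : Set T := ⋂ n, Dn n with hD
  have hDm : MeasurableSet D := MeasurableSet.iInter hDnm
  have hDS : D ⊆ S := (Set.iInter_subset Dn 0).trans (hDnS 0)
  -- measure estimate
  have hmeas : ∀ n, μ (S \ Dn n) ≤ ε * 2⁻¹ := by
    intro n
    have key : ∀ n, μ (S \ Dn n) ≤ ε * 2⁻¹ ^ 2 + ∑ k ∈ Finset.range n, ε * 2⁻¹ ^ (k+3) := by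
      intro n
      induction n with
      | zero => rw [Finset.sum_range_zero, add_zero]; exact hQ0μ
      | succ n ih =>
        have hsub : S \ Dn (n+1) ⊆ (S \ Dn n) ∪ (Dn n \ Dn (n+1)) := by
          intro t ⟨ht1, ht2⟩
          by_cases h : t ∈ Dn n
          · exact Or.inr ⟨h, ht2⟩
          · exact Or.inl ⟨ht1, h⟩
        calc μ (S \ Dn (n+1)) ≤ μ (S \ Dn n) + μ (Dn n \ Dn (n+1)) :=
              le_trans (measure_mono hsub) (measure_union_le _ _)
          _ ≤ (ε * 2⁻¹ ^ 2 + ∑ k ∈ Finset.range n, ε * 2⁻¹ ^ (k+3)) + ε * 2⁻¹ ^ (n+3) :=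
              add_le_add ih (hseqrel n).2
          _ = ε * 2⁻¹ ^ 2 + ∑ k ∈ Finset.range (n+1), ε * 2⁻¹ ^ (k+3) := by
              rw [Finset.sum_range_succ, add_assoc]
    refine le_trans (key n) ?_
    have h2 : ∑ k ∈ Finset.range n, ε * 2⁻¹ ^ (k+3) ≤ ε * 2⁻¹ ^ 2 := by
      calc ∑ k ∈ Finset.range n, ε * 2⁻¹ ^ (k+3) ≤ ∑' k : ℕ, ε * 2⁻¹ ^ (k+3) :=
            ENNReal.sum_le_tsum _
        _ = ε * 2⁻¹ ^ 3 * ∑' k : ℕ, 2⁻¹ ^ k := by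
            rw [← ENNReal.tsum_mul_left]
            congr 1; ext k; rw [pow_add]; ring
        _ = ε * 2⁻¹ ^ 3 * 2 := by
            rw [ENNReal.tsum_geometric]; norm_num [ENNReal.one_sub_inv_two]
        _ = ε * 2⁻¹ ^ 2 := by
            rw [mul_assoc, pow_succ, mul_assoc,
              ENNReal.inv_mul_cancel (by norm_num) (by norm_num), mul_one]
    calc ε * 2⁻¹ ^ 2 + ∑ k ∈ Finset.range n, ε * 2⁻¹ ^ (k+3)
        ≤ ε * 2⁻¹ ^ 2 + ε * 2⁻¹ ^ 2 := add_le_add le_rfl h2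
      _ = ε * 2⁻¹ := by
          rw [← mul_add]
          congr 1
          rw [pow_two, ← two_mul, ← mul_assoc,
            ENNReal.mul_inv_cancel (by norm_num) (by norm_num), one_mul]
  have hDμ : μ (S \ D) < ε := by
    have : S \ D = ⋃ n, (S \ Dn n) := by
      rw [hD, Set.diff_iInter]
    rw [this]
    have hmono : Monotone (fun n => S \ Dn n) := by
      have hanti : Antitone Dn := antitone_nat_of_succ_le hDnanti
      intro a b hab
      exact Set.diff_subset_diff_right (hanti hab)
    rw [Directed.measure_iUnion (hmono.directed_le)]
    refine lt_of_le_of_lt (iSup_le fun n => hmeas n) ?_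
    calc ε * 2⁻¹ < ε * 1 := by
          rw [ENNReal.mul_lt_mul_iff_right hε.ne' hεtop]
          norm_num
      _ = ε := mul_one ε
  -- approximating functions
  set xn : ℕ → T → X := fun n t => if h : ∃ i, t ∈ Qn n i then cn n (Nat.find h) else 0
    with hxn
  have hxnsm : ∀ n, StronglyMeasurable (xn n) :=
    fun n => glueSM (Qn n) ((hseqinv n).1) (fun i _ => cn n i)
      (fun i => stronglyMeasurable_const) 0
  -- on D, xn is close to Φ and Cauchy
  have hxnball : ∀ n, ∀ t ∈ D, (Φ t ∩ Metric.ball (xn n t) ((1/2 : ℝ)^n)).Nonempty := by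
    intro n t ht
    have htn : t ∈ Dn n := Set.mem_iInter.1 ht n
    rw [hDn, Set.mem_iUnion] at htn
    have h : ∃ i, t ∈ Qn n i := htn
    rw [hxn]
    simp only [dif_pos h]
    exact (hseqinv n).2.2.2 (Nat.find h) t (Nat.find_spec h)
  have hxncauchy : ∀ t ∈ D, ∀ n, dist (xn n t) (xn (n+1) t) ≤ 2 * (1/2 : ℝ)^n := by
    intro t ht n
    have htn1 : t ∈ Dn (n+1) := Set.mem_iInter.1 ht (n+1)
    rw [hDn, Set.mem_iUnion] at htn1
    have h1 : ∃ i, t ∈ Qn (n+1) i := htn1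
    have htn : t ∈ Dn n := Set.mem_iInter.1 ht n
    rw [hDn, Set.mem_iUnion] at htn
    have h0 : ∃ i, t ∈ Qn n i := htn
    rw [hxn]
    simp only [dif_pos h0, dif_pos h1]
    obtain ⟨i, hti, hdist⟩ := (hseqrel n).1 (Nat.find h1) t (Nat.find_spec h1)
    have hieq : i = Nat.find h0 := by
      by_contra hne'
      exact Set.disjoint_left.1 ((hseqinv n).2.2.1 hne') hti (Nat.find_spec h0)
    rw [hieq] at hdist
    rw [dist_comm]
    exact hdist
  -- limits
  set wn : ℕ → T → X := fun n => D.piecewise (xn n) (fun _ => 0) with hwn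
  have hwnsm : ∀ n, StronglyMeasurable (wn n) :=
    fun n => StronglyMeasurable.piecewise hDm (hxnsm n) stronglyMeasurable_const
  have hlim : ∀ t, ∃ L, Tendsto (fun n => wn n t) atTop (𝓝 L) := by
    intro t
    by_cases ht : t ∈ D
    · have hcseq : CauchySeq (fun n => xn n t) :=
        cauchySeq_of_le_geometric (1/2 : ℝ) 2 (by norm_num) (fun n => hxncauchy t ht n)
      obtain ⟨L, hL⟩ := cauchySeq_tendsto_of_complete hcseq
      refine ⟨L, ?_⟩
      have : (fun n => wn n t) = fun n => xn n t := by
        funext n; rw [hwn]; exact Set.piecewise_eq_of_mem _ _ _ ht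
      rw [this]; exact hL
    · refine ⟨0, ?_⟩
      have : (fun n => wn n t) = fun _ => (0 : X) := by
        funext n; rw [hwn]; exact Set.piecewise_eq_of_notMem _ _ _ ht
      rw [this]; exact tendsto_const_nhds
  choose x hx using hlim
  refine ⟨D, hDS, hDm, hDμ, x, ?_, ?_⟩
  · exact stronglyMeasurable_of_tendsto atTop hwnsm (tendsto_pi_nhds.2 hx)
  · intro t ht
    have hxt : Tendsto (fun n => xn n t) atTop (𝓝 (x t)) := by
      have : (fun n => wn n t) = fun n => xn n t := by
        funext n; rw [hwn]; exact Set.piecewise_eq_of_mem _ _ _ ht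
      rw [← this]; exact hx t
    -- choose points in Φ t approximating xn
    have hyex : ∀ n, ∃ y ∈ Φ t, dist y (xn n t) < (1/2 : ℝ)^n := by
      intro n
      obtain ⟨y, hy1, hy2⟩ := hxnball n t ht
      exact ⟨y, hy1, Metric.mem_ball.1 hy2⟩
    choose y hy1 hy2 using hyex
    have hytend : Tendsto y atTop (𝓝 (x t)) := by
      rw [tendsto_iff_dist_tendsto_zero]
      refine squeeze_zero (g := fun n => (1/2 : ℝ)^n + dist (xn n t) (x t))
        (fun n => dist_nonneg)
        (fun n => (dist_triangle (y n) (xn n t) (x t)).trans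
          (add_le_add (hy2 n).le le_rfl)) ?_
      · have h1 : Tendsto (fun n => ((1:ℝ)/2)^n) atTop (𝓝 0) :=
          tendsto_pow_atTop_nhds_zero_of_lt_one (by norm_num) (by norm_num)
        have h2 : Tendsto (fun n => dist (xn n t) (x t)) atTop (𝓝 0) :=
          tendsto_iff_dist_tendsto_zero.1 hxt
        simpa using h1.add h2
    have : x t ∈ closure (Φ t) :=
      mem_closure_of_tendsto hytend (Filter.Eventually.of_forall hy1)
    rwa [(hcl t (hDS ht)).closure_eq] at this

theorem lscOn_of_closure_iUnion {I : Type} {Ci : I → T → Set X} {C : T → Set X}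
    {B : Set T} (h : ∀ i, LscOn B (Ci i))
    (hCeq : ∀ t, C t = closure (⋃ i, Ci i t)) : LscOn B C := by
  intro t ht V hV hne
  obtain ⟨z, hz1, hz2⟩ := hne
  rw [hCeq] at hz1
  have hz3 : z ∈ closure (V ∩ ⋃ i, Ci i t) := hV.inter_closure ⟨hz2, hz1⟩
  have hne2 : (V ∩ ⋃ i, Ci i t).Nonempty := by
    rw [← closure_nonempty_iff]; exact ⟨z, hz3⟩
  obtain ⟨w, hwV, hwU⟩ := hne2
  rw [Set.mem_iUnion] at hwU
  obtain ⟨i, hwi⟩ := hwU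
  filter_upwards [h i t ht V hV ⟨w, hwi, hwV⟩] with s ⟨u, hu1, hu2⟩
  refine ⟨u, ?_, hu2⟩
  rw [hCeq]
  exact subset_closure (Set.mem_iUnion.2 ⟨i, hu1⟩)


end SelectionHelpers

/-- strongly measurable selection of an admissible multifunction with
nonempty values. -/
theorem stmt16 {T X : Type*} [TopologicalSpace T] [MeasurableSpace T]
    [OpensMeasurableSpace T]
    [NormedAddCommGroup X] [NormedSpace ℝ X] [CompleteSpace X]
    (μ : MeasureTheory.Measure T) [MeasureTheory.SigmaFinite μ] [μ.IsComplete]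
    (hreg : InnerRegularM μ)
    (C : T → Set X) (hC : AdmissibleMultifunction μ C)
    (A : Set T) (hA : MeasurableSet A)
    (hne : ∀ t ∈ A, (C t).Nonempty) :
    ∃ x : T → X, MeasureTheory.StronglyMeasurable x ∧
      ∀ᵐ t ∂(μ.restrict A), x t ∈ C t := by
  classical
  obtain ⟨I, Ci, hLusin, hcc, hCeq⟩ := hC
  have hCcl : ∀ t, IsClosed (C t) := fun t => by rw [hCeq]; exact isClosed_closure
  -- decompose A into finite measure pieces
  set Ak : ℕ → Set T := fun k => A ∩ disjointed (spanningSets μ) k with hAk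
  have hAkm : ∀ k, MeasurableSet (Ak k) := fun k =>
    hA.inter (MeasurableSet.disjointed (measurableSet_spanningSets μ) k)
  have hAkfin : ∀ k, μ (Ak k) < ⊤ := fun k =>
    lt_of_le_of_lt (measure_mono ((Set.inter_subset_right).trans
      (disjointed_subset _ k))) (measure_spanningSets_lt_top μ k)
  have hAkU : ⋃ k, Ak k = A := by
    rw [hAk, ← Set.inter_iUnion, iUnion_disjointed, iUnion_spanningSets, Set.inter_univ]
  -- for each (k, m) produce a partial selection
  have hsel : ∀ k m : ℕ, ∃ (D : Set T) (x : T → X), MeasurableSet D ∧ D ⊆ Ak k ∧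
      μ (Ak k \ D) ≤ 2⁻¹ ^ m + 2⁻¹ ^ m ∧ StronglyMeasurable x ∧ ∀ t ∈ D, x t ∈ C t := by
    intro k m
    have hεm : (0:ℝ≥0∞) < 2⁻¹ ^ m := ENNReal.pow_pos (by norm_num) m
    obtain ⟨B, hBA, hBc, hBμ, hBlsc⟩ := hLusin (2⁻¹ ^ m) hεm (Ak k) (hAkm k) (hAkfin k)
    set B' : Set T := Ak k \ toMeasurable μ (Ak k \ B) with hB'
    have hB'm : MeasurableSet B' := (hAkm k).diff (measurableSet_toMeasurable μ _)
    have hB'B : B' ⊆ B := fun t ⟨ht1, ht2⟩ => by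
      by_contra hc
      exact ht2 (subset_toMeasurable μ _ ⟨ht1, hc⟩)
    have hB'A : B' ⊆ Ak k := fun t ht => ht.1
    have hB'loss : μ (Ak k \ B') ≤ 2⁻¹ ^ m := by
      have hsub : Ak k \ B' ⊆ toMeasurable μ (Ak k \ B) := fun t ⟨ht1, ht2⟩ => by
        simpa [hB', ht1] using ht2
      calc μ (Ak k \ B') ≤ μ (toMeasurable μ (Ak k \ B)) := measure_mono hsub
        _ = μ (Ak k \ B) := measure_toMeasurable _
        _ ≤ 2⁻¹ ^ m := hBμ.le
    have hlscB' : LscOn B' C :=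
      (lscOn_of_closure_iUnion hBlsc hCeq).mono hB'B
    have hAkA : Ak k ⊆ A := Set.inter_subset_left
    obtain ⟨D, hDB', hDm, hDμ, x, hxsm, hxmem⟩ := selCore hreg hB'm
      (lt_of_le_of_lt (measure_mono hB'A) (hAkfin k)) hlscB'
      (fun t ht => hne t (hAkA (hB'A ht))) (fun t ht => hCcl t)
      (ε := 2⁻¹ ^ m) hεm (by simp [ENNReal.inv_ne_top])
    refine ⟨D, x, hDm, hDB'.trans hB'A, ?_, hxsm, hxmem⟩
    have hsub : Ak k \ D ⊆ (Ak k \ B') ∪ (B' \ D) := by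
      intro t ⟨ht1, ht2⟩
      by_cases h : t ∈ B'
      · exact Or.inr ⟨h, ht2⟩
      · exact Or.inl ⟨ht1, h⟩
    calc μ (Ak k \ D) ≤ μ (Ak k \ B') + μ (B' \ D) :=
          le_trans (measure_mono hsub) (measure_union_le _ _)
      _ ≤ 2⁻¹ ^ m + 2⁻¹ ^ m := add_le_add hB'loss hDμ.le
  choose D xf hDm hDA hDμ hxsm hxmem using hsel
  -- each Ak is a.e. covered by ⋃ m, D k m
  have hcov : ∀ k, μ (Ak k \ ⋃ m, D k m) = 0 := by
    intro k
    have hle : ∀ m, μ (Ak k \ ⋃ m', D k m') ≤ 2⁻¹ ^ m + 2⁻¹ ^ m := fun m =>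
      le_trans (measure_mono (Set.diff_subset_diff_right (Set.subset_iUnion _ m))) (hDμ k m)
    have htend : Tendsto (fun m : ℕ => (2⁻¹ : ℝ≥0∞) ^ m + 2⁻¹ ^ m) atTop (𝓝 0) := by
      have h1 : Tendsto (fun m : ℕ => (2⁻¹ : ℝ≥0∞) ^ m) atTop (𝓝 0) :=
        ENNReal.tendsto_pow_atTop_nhds_zero_of_lt_one (by norm_num)
      simpa using h1.add h1
    exact le_antisymm (ge_of_tendsto htend (Filter.Eventually.of_forall hle)) (zero_le)
  -- glue everything
  set ee : ℕ ≃ ℕ × ℕ := (Denumerable.eqv (ℕ × ℕ)).symm with hee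
  set E : ℕ → Set T := fun n => D (ee n).1 (ee n).2 with hE
  have hEm : ∀ n, MeasurableSet (E n) := fun n => hDm _ _
  set x : T → X := fun t => if h : ∃ n, t ∈ E n then xf (ee (Nat.find h)).1 (ee (Nat.find h)).2 t else 0
    with hx
  refine ⟨x, ?_, ?_⟩
  · exact glueSM E hEm (fun n => xf (ee n).1 (ee n).2) (fun n => hxsm _ _) 0
  · rw [ae_iff, Measure.restrict_apply' hA]
    have hsub : {t | ¬ x t ∈ C t} ∩ A ⊆ ⋃ k, (Ak k \ ⋃ m, D k m) := by
      intro t ⟨htx, htA⟩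
      have htk : ∃ k, t ∈ Ak k := by
        rw [← Set.mem_iUnion, hAkU]; exact htA
      obtain ⟨k, htk⟩ := htk
      rw [Set.mem_iUnion]
      refine ⟨k, htk, fun hmem => htx ?_⟩
      rw [Set.mem_iUnion] at hmem
      obtain ⟨m, htm⟩ := hmem
      have hEn : ∃ n, t ∈ E n := ⟨ee.symm (k, m), by simp [hE, Equiv.apply_symm_apply, htm]⟩
      rw [hx]
      simp only [dif_pos hEn]
      exact hxmem _ _ t (Nat.find_spec hEn)
    refine le_antisymm ?_ (zero_le)
    calc μ ({t | ¬ x t ∈ C t} ∩ A) ≤ μ (⋃ k, (Ak k \ ⋃ m, D k m)) := measure_mono hsub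
      _ ≤ ∑' k, μ (Ak k \ ⋃ m, D k m) := measure_iUnion_le _
      _ = 0 := by simp [hcov]
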